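/- Gronwall-type stability of gradient trajectories: let T > 0, C > 0, ε > 0, α > 0, and let ψ, ψ* : ℝ^d × [0,T] → ℝ be continuously differentiable in the space variable, such that for every t ∈ [0,T] the functions x ↦ C|x|²/2 − ψ(x,t) and x ↦ C|x|²/2 − ψ*(x,t) are convex on ℝ^d, and |ψ(x,t) − ψ*(x,t)| < ε for all x ∈ ℝ^d, t ∈ [0,T]. Let y, y* : [0,T] → ℝ^d be differentiable with ẏ(t) = ∇_x ψ(y(t), t) and ẏ*(t) = ∇_x ψ*(y*(t), t), and suppose |y(0) − y*(0)|² < α. Then for all t ∈ [0,T]: |y(t) − y*(t)|² < 2ε (e^{2Ct} − 1)/C + α e^{2Ct}. -/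

import Mathlib

open Set Real InnerProductSpace

local notation "⟪" x ", " y "⟫" => @inner ℝ _ _ x y

variable {E : Type*} [NormedAddCommGroup E] [InnerProductSpace ℝ E] [CompleteSpace E]

lemma my_inner_gradient (f : E → ℝ) (y v : E) : ⟪gradient f y, v⟫ = fderiv ℝ f y v := by
  rw [gradient, ← InnerProductSpace.toDual_apply_apply]
  simp

omit [CompleteSpace E] in
lemma my_convex_subgrad {g : E → ℝ} {g' : E →L[ℝ] ℝ} (hconv : ConvexOn ℝ Set.univ g) {y : E}
    (hg : HasFDerivAt g g' y) (x : E) : g y + g' (x - y) ≤ g x := by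
  have h : ConvexOn ℝ Set.univ fun s : ℝ => g (AffineMap.lineMap y x s) := by
    have := hconv.comp_affineMap (AffineMap.lineMap y x)
    exact this
  have hl : HasDerivAt (fun s : ℝ => AffineMap.lineMap y x s) (x - y) (0 : ℝ) := by
    simp only [AffineMap.lineMap_apply]
    simpa using ((hasDerivAt_id (0:ℝ)).smul_const (x - y)).add_const y
  have h0 : AffineMap.lineMap y x (0:ℝ) = y := by simp
  have hd : HasDerivAt (fun s : ℝ => g (AffineMap.lineMap y x s)) (g' (x - y)) 0 := by
    have hg' : HasFDerivAt g g' ((AffineMap.lineMap y x) (0:ℝ)) := by rw [h0]; exact hg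
    exact hg'.comp_hasDerivAt (0:ℝ) hl
  have := h.le_slope_of_hasDerivAt (Set.mem_univ (0:ℝ)) (Set.mem_univ (1:ℝ)) one_pos hd
  rw [slope_def_field] at this
  simp only [AffineMap.lineMap_apply_one, h0] at this
  have : g' (x - y) ≤ g x - g y := by
    simpa [div_one] using this
  linarith

lemma my_semiconcave {f : E → ℝ} (hf : ContDiff ℝ 1 f) {C : ℝ}
    (hconv : ConvexOn ℝ Set.univ fun z => C * ‖z‖ ^ 2 / 2 - f z) (x y : E) :
    f x ≤ f y + ⟪gradient f y, x - y⟫ + C * ‖x - y‖ ^ 2 / 2 := by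
  have hfd : DifferentiableAt ℝ f y := (hf.differentiable one_ne_zero) y
  have hn : HasFDerivAt (fun z : E => ⟪z, z⟫)
      ((fderivInnerCLM ℝ ((y : E), y)).comp
        ((ContinuousLinearMap.id ℝ E).prod (ContinuousLinearMap.id ℝ E))) y :=
    (hasFDerivAt_id y).inner ℝ (hasFDerivAt_id y)
  have hq : HasFDerivAt (fun z : E => C * ‖z‖ ^ 2 / 2 - f z)
      ((C / 2 : ℝ) • (((fderivInnerCLM ℝ ((y : E), y)).comp
        ((ContinuousLinearMap.id ℝ E).prod (ContinuousLinearMap.id ℝ E)))) - fderiv ℝ f y) y := by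
    have h1 := (hn.const_mul (C / 2)).sub hfd.hasFDerivAt
    have heq : (fun z : E => C / 2 * ⟪z, z⟫ - f z) = fun z : E => C * ‖z‖ ^ 2 / 2 - f z := by
      funext z; rw [real_inner_self_eq_norm_sq]; ring
    rw [← heq]
    exact h1
  have key := my_convex_subgrad hconv hq x
  have hval : ((C / 2 : ℝ) • (((fderivInnerCLM ℝ ((y : E), y)).comp
      ((ContinuousLinearMap.id ℝ E).prod (ContinuousLinearMap.id ℝ E)))) - fderiv ℝ f y) (x - y)
      = C * ⟪y, x - y⟫ - ⟪gradient f y, x - y⟫ := by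
    rw [my_inner_gradient]
    simp [fderivInnerCLM_apply, real_inner_comm (x - y) y]
    ring
  rw [hval] at key
  have hns : ‖x - y‖ ^ 2 = ‖x‖ ^ 2 - 2 * ⟪x, y⟫ + ‖y‖ ^ 2 := norm_sub_sq_real x y
  have hi : ⟪y, x - y⟫ = ⟪x, y⟫ - ‖y‖ ^ 2 := by
    rw [inner_sub_right, real_inner_comm, real_inner_self_eq_norm_sq]
  rw [hi] at key
  rw [hns]
  linarith [key]

/-- **Gronwall-type stability of gradient trajectories.** Let `ψ, ψ*` be potentials on
`ℝ^d × [0,T]`, continuously differentiable in the space variable, with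
`x ↦ C|x|²/2 − ψ(x,t)` and `x ↦ C|x|²/2 − ψ*(x,t)` convex for every `t ∈ [0,T]`, and
`|ψ − ψ*| < ε` on `ℝ^d × [0,T]`. If `y, y*` are trajectories of the gradient fields of `ψ, ψ*`
with `|y(0) − y*(0)|² < α`, then `|y(t) − y*(t)|² < 2ε(e^{2Ct} − 1)/C + α e^{2Ct}`
for all `t ∈ [0,T]`. -/
theorem gronwall_stability_of_gradient_trajectories {d : ℕ}
    (T C ε α : ℝ) (hT : 0 < T) (hC : 0 < C) (hε : 0 < ε) (hα : 0 < α)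
    (ψ ψstar : EuclideanSpace ℝ (Fin d) → ℝ → ℝ)
    (hψ_diff : ∀ t ∈ Set.Icc (0 : ℝ) T, ContDiff ℝ 1 (fun x => ψ x t))
    (hψstar_diff : ∀ t ∈ Set.Icc (0 : ℝ) T, ContDiff ℝ 1 (fun x => ψstar x t))
    (hψ_conv : ∀ t ∈ Set.Icc (0 : ℝ) T,
      ConvexOn ℝ Set.univ (fun x : EuclideanSpace ℝ (Fin d) => C * ‖x‖ ^ 2 / 2 - ψ x t))
    (hψstar_conv : ∀ t ∈ Set.Icc (0 : ℝ) T,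
      ConvexOn ℝ Set.univ (fun x : EuclideanSpace ℝ (Fin d) => C * ‖x‖ ^ 2 / 2 - ψstar x t))
    (hclose : ∀ (x : EuclideanSpace ℝ (Fin d)), ∀ t ∈ Set.Icc (0 : ℝ) T,
      |ψ x t - ψstar x t| < ε)
    (y ystar : ℝ → EuclideanSpace ℝ (Fin d))
    (hy : ∀ t ∈ Set.Icc (0 : ℝ) T, HasDerivAt y (gradient (fun x => ψ x t) (y t)) t)
    (hystar : ∀ t ∈ Set.Icc (0 : ℝ) T,
      HasDerivAt ystar (gradient (fun x => ψstar x t) (ystar t)) t)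
    (hinit : ‖y 0 - ystar 0‖ ^ 2 < α) :
    ∀ t ∈ Set.Icc (0 : ℝ) T,
      ‖y t - ystar t‖ ^ 2 < 2 * ε * (Real.exp (2 * C * t) - 1) / C
        + α * Real.exp (2 * C * t) := by
  set φ : ℝ → ℝ := fun t => ‖y t - ystar t‖ ^ 2 with hφdef
  set f' : ℝ → ℝ := fun t =>
    2 * ⟪gradient (fun x => ψ x t) (y t) - gradient (fun x => ψstar x t) (ystar t),
      y t - ystar t⟫ with hf'def
  have hφderiv : ∀ t ∈ Set.Icc (0 : ℝ) T, HasDerivAt φ (f' t) t := by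
    intro t ht
    have hu : HasDerivAt (fun s => y s - ystar s)
        (gradient (fun x => ψ x t) (y t) - gradient (fun x => ψstar x t) (ystar t)) t :=
      (hy t ht).sub (hystar t ht)
    have hin := HasDerivAt.inner ℝ hu hu
    have heq : (fun s : ℝ => ⟪y s - ystar s, y s - ystar s⟫) = φ := by
      funext s; rw [real_inner_self_eq_norm_sq]
    rw [heq] at hin
    refine hin.congr_deriv ?_
    simp only [hf'def]
    rw [real_inner_comm]
    ring
  have key : ∀ t ∈ Set.Icc (0 : ℝ) T,
      φ t ≤ gronwallBound (‖y 0 - ystar 0‖ ^ 2) (2 * C) (4 * ε) (t - 0) := by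
    apply le_gronwallBound_of_liminf_deriv_right_le (f' := f')
    · intro t ht
      exact ((hφderiv t ht).continuousAt).continuousWithinAt
    · intro x hx r hr
      have h := ((hφderiv x (Set.Ico_subset_Icc_self hx)).hasDerivWithinAt
        (s := Set.Ici x)).liminf_right_slope_le hr
      exact h.mono fun z hz => by rwa [slope_def_field, div_eq_inv_mul] at hz
    · exact le_rfl
    · intro t ht'
      have ht : t ∈ Set.Icc (0 : ℝ) T := Set.Ico_subset_Icc_self ht'
      set a := y t with ha
      set b := ystar t with hb
      have h1 := my_semiconcave (hψ_diff t ht) (hψ_conv t ht) b a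
      have h2 := my_semiconcave (hψstar_diff t ht) (hψstar_conv t ht) a b
      have hc1 := abs_lt.1 (hclose a t ht)
      have hc2 := abs_lt.1 (hclose b t ht)
      have hrev : ‖b - a‖ = ‖a - b‖ := norm_sub_rev b a
      have hneg : ⟪gradient (fun x => ψ x t) a, b - a⟫
          = -⟪gradient (fun x => ψ x t) a, a - b⟫ := by
        rw [← inner_neg_right]; congr 1; abel
      have hsub : ⟪gradient (fun x => ψ x t) a - gradient (fun x => ψstar x t) b, a - b⟫
          = ⟪gradient (fun x => ψ x t) a, a - b⟫ - ⟪gradient (fun x => ψstar x t) b, a - b⟫ :=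
        inner_sub_left _ _ _
      simp only [hf'def, hφdef]
      rw [hsub]
      rw [hneg, hrev] at h1
      nlinarith [h1, h2, hc1.2, hc2.2]
  intro t ht
  have h := key t ht
  rw [sub_zero, gronwallBound_of_K_ne_0 (by positivity : (2 * C) ≠ 0)] at h
  have hX : (1 : ℝ) ≤ Real.exp (2 * C * t) := by
    apply Real.one_le_exp
    have := ht.1
    positivity
  have hXpos : (0 : ℝ) < Real.exp (2 * C * t) := Real.exp_pos _
  have heq : 4 * ε / (2 * C) * (Real.exp (2 * C * t) - 1)
      = 2 * ε * (Real.exp (2 * C * t) - 1) / C := by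
    field_simp
    ring
  simp only at h
  rw [heq] at h
  have hstrict : ‖y 0 - ystar 0‖ ^ 2 * Real.exp (2 * C * t) < α * Real.exp (2 * C * t) :=
    mul_lt_mul_of_pos_right hinit hXpos
  show φ t < _
  linarith
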